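/- Let (X,d) be a pointed discrete metric space and m ≥ 0. If the sphere S^m is a Lipschitz extensor of X, then every norm-preserving Lipschitz function f : A → ℝ^{m+1}, A ⊂ X, extends to a norm-preserving Lipschitz function f' : X → ℝ^{m+1}. -/

import Mathlib

private lemma stmt4_aux_cancel (z a d : ℝ) (hz : z ≠ 0) : z * (a / z * d) = a * d := by
  field_simp

/-- A function between metric spaces is *Lipschitz* if it is `λ`-Lipschitz for some `λ ≥ 0`. -/
def LipFun {X Y : Type*} [MetricSpace X] [MetricSpace Y] (f : X → Y) : Prop :=
  ∃ lam : ℝ, 0 ≤ lam ∧ ∀ x y, dist (f x) (f y) ≤ lam * dist x y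

set_option maxHeartbeats 2000000 in
/-- if the sphere `Sᵐ` is a Lipschitz extensor of the pointed discrete metric
space `X`, then every norm-preserving Lipschitz function `f : A → ℝ^{m+1}`, `A ⊂ X`, extends
to a norm-preserving Lipschitz function `X → ℝ^{m+1}`. -/
theorem stmt_4 {X : Type*} [MetricSpace X] (x₀ : X)
    (hdisc : ∃ ε > 0, ∀ x y : X, x ≠ y → ε ≤ dist x y) (m : ℕ)
    (hext : ∃ C > (0 : ℝ), ∀ lam > (0 : ℝ), ∀ (B : Set X)
        (u : B → Metric.sphere (0 : EuclideanSpace ℝ (Fin (m + 1))) 1),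
        (∀ x y : B, dist (u x) (u y) ≤ lam * dist (x : X) (y : X)) →
        ∃ v : X → Metric.sphere (0 : EuclideanSpace ℝ (Fin (m + 1))) 1,
          (∀ b : B, v (b : X) = u b) ∧ ∀ x y : X, dist (v x) (v y) ≤ C * lam * dist x y)
    (A : Set X) (f : A → EuclideanSpace ℝ (Fin (m + 1)))
    (hnorm : ∀ a : A, ‖f a‖ = dist (a : X) x₀) (hf : LipFun f) :
    ∃ F : X → EuclideanSpace ℝ (Fin (m + 1)),
      (∀ a : A, F (a : X) = f a) ∧ (∀ x : X, ‖F x‖ = dist x x₀) ∧ LipFun F := by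
  classical
  obtain ⟨C, hC0, hext'⟩ := hext
  obtain ⟨lam, hlam0, hlip⟩ := hf
  -- zpow basics
  have hz : ∀ k : ℤ, (0:ℝ) < (100:ℝ) ^ k := fun k => zpow_pos (by norm_num) k
  have hzne : ∀ k : ℤ, ((100:ℝ) ^ k) ≠ 0 := fun k => ne_of_gt (hz k)
  have hzm : ∀ p q : ℤ, p ≤ q → (100:ℝ) ^ p ≤ (100:ℝ) ^ q := fun p q h =>
    zpow_le_zpow_right₀ (by norm_num) h
  have hzlt : ∀ p q : ℤ, (100:ℝ) ^ p < (100:ℝ) ^ q → p < q := by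
    intro p q h
    by_contra hc
    push_neg at hc
    exact absurd (hzm q p hc) (not_le.mpr h)
  have hz1 : ∀ k : ℤ, (100:ℝ) ^ (k + 1) = 100 * (100:ℝ) ^ k := by
    intro k
    rw [zpow_add_one₀ (by norm_num : (100:ℝ) ≠ 0)]
    ring
  have hzs1 : ∀ k : ℤ, (100:ℝ) ^ (k - 1) = (100:ℝ) ^ k / 100 := by
    intro k
    rw [zpow_sub₀ (by norm_num : (100:ℝ) ≠ 0), zpow_one]
  have hzs2 : ∀ k : ℤ, (100:ℝ) ^ (k - 2) = (100:ℝ) ^ k / 10000 := by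
    intro k
    rw [zpow_sub₀ (by norm_num : (100:ℝ) ≠ 0)]
    congr 1
    rw [show (2:ℤ) = 1 + 1 from rfl, zpow_add₀ (by norm_num : (100:ℝ) ≠ 0), zpow_one]
    norm_num
  -- a unit vector
  obtain ⟨e₀, he₀'⟩ : (Metric.sphere (0 : EuclideanSpace ℝ (Fin (m + 1))) 1).Nonempty :=
    NormedSpace.sphere_nonempty.mpr zero_le_one
  have he₀ : ‖e₀‖ = 1 := mem_sphere_zero_iff_norm.mp he₀'
  -- the direction map
  set dir : X → EuclideanSpace ℝ (Fin (m + 1)) :=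
    fun x => if h : x ∈ A then (dist x x₀)⁻¹ • f ⟨x, h⟩ else e₀ with hdir_def
  have hdirA : ∀ (x : X) (h : x ∈ A), dir x = (dist x x₀)⁻¹ • f ⟨x, h⟩ := by
    intro x h
    simp only [hdir_def]
    rw [dif_pos h]
  have hdirn : ∀ x : X, x ≠ x₀ → ‖dir x‖ = 1 := by
    intro x hx
    by_cases h : x ∈ A
    · have hn : ‖f ⟨x, h⟩‖ = dist x x₀ := hnorm ⟨x, h⟩
      rw [hdirA x h, norm_smul, hn, Real.norm_eq_abs, abs_inv, abs_of_nonneg dist_nonneg]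
      exact inv_mul_cancel₀ (dist_ne_zero.mpr hx)
    · simp only [hdir_def]
      rw [dif_neg h]
      exact he₀
  have hfdist : ∀ p q : A, ‖f p - f q‖ ≤ lam * dist (p : X) (q : X) := by
    intro p q
    have h := hlip p q
    rwa [dist_eq_norm, Subtype.dist_eq] at h
  -- conical Lipschitz bound for dir on A'
  have hdd : ∀ x y : X, x ∈ A → y ∈ A → x ≠ x₀ → y ≠ x₀ → dist y x₀ ≤ dist x x₀ →
      ‖dir x - dir y‖ ≤ (lam + 1) / dist x x₀ * dist x y := by
    intro x y hx hy hx0 hy0 hyx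
    have hry : 0 < dist y x₀ := dist_pos.mpr hy0
    have hrx : 0 < dist x x₀ := lt_of_lt_of_le hry hyx
    rw [hdirA x hx, hdirA y hy]
    have hsplit : (dist x x₀)⁻¹ • f ⟨x, hx⟩ - (dist y x₀)⁻¹ • f ⟨y, hy⟩
        = (dist x x₀)⁻¹ • (f ⟨x, hx⟩ - f ⟨y, hy⟩)
          + ((dist x x₀)⁻¹ - (dist y x₀)⁻¹) • f ⟨y, hy⟩ := by
      rw [smul_sub, sub_smul]
      abel
    rw [hsplit]
    have h1 : ‖(dist x x₀)⁻¹ • (f ⟨x, hx⟩ - f ⟨y, hy⟩)‖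
        ≤ (dist x x₀)⁻¹ * (lam * dist x y) := by
      rw [norm_smul, Real.norm_eq_abs, abs_inv, abs_of_nonneg dist_nonneg]
      have h2 : ‖f ⟨x, hx⟩ - f ⟨y, hy⟩‖ ≤ lam * dist x y := hfdist ⟨x, hx⟩ ⟨y, hy⟩
      exact mul_le_mul_of_nonneg_left h2 (inv_nonneg.mpr dist_nonneg)
    have h2 : ‖((dist x x₀)⁻¹ - (dist y x₀)⁻¹) • f ⟨y, hy⟩‖
        ≤ (dist x x₀)⁻¹ * dist x y := by
      have hn : ‖f ⟨y, hy⟩‖ = dist y x₀ := hnorm ⟨y, hy⟩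
      rw [norm_smul, hn, Real.norm_eq_abs]
      have hinv : (dist x x₀)⁻¹ ≤ (dist y x₀)⁻¹ := by
        rw [← one_div, ← one_div]
        exact one_div_le_one_div_of_le hry hyx
      have habs : |(dist x x₀)⁻¹ - (dist y x₀)⁻¹| = (dist y x₀)⁻¹ - (dist x x₀)⁻¹ := by
        rw [abs_sub_comm]
        exact abs_of_nonneg (by linarith)
      rw [habs]
      have hd1 : dist x x₀ - dist y x₀ ≤ dist x y := by
        have h4 := abs_dist_sub_le x y x₀
        linarith [(abs_le.mp h4).2]
      have heq : ((dist y x₀)⁻¹ - (dist x x₀)⁻¹) * dist y x₀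
          = (dist x x₀ - dist y x₀) * (dist x x₀)⁻¹ := by
        field_simp
      rw [heq, mul_comm]
      exact mul_le_mul_of_nonneg_left hd1 (inv_nonneg.mpr dist_nonneg)
    refine le_trans (norm_add_le _ _) (le_trans (add_le_add h1 h2) (le_of_eq ?_))
    field_simp
  have hcon : ∀ s : ℝ, 0 < s → ∀ x y : X, x ∈ A → y ∈ A → x ≠ x₀ → y ≠ x₀ →
      s ≤ dist x x₀ → s ≤ dist y x₀ →
      ‖dir x - dir y‖ ≤ (lam + 1) / s * dist x y := by
    intro s hs x y hx hy hx0 hy0 hsx hsy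
    have hmono : ∀ z : X, s ≤ dist z x₀ → (lam + 1) / dist z x₀ ≤ (lam + 1) / s := by
      intro z hsz
      have hz0 : 0 < dist z x₀ := lt_of_lt_of_le hs hsz
      rw [div_le_div_iff₀ hz0 hs]
      exact mul_le_mul_of_nonneg_left hsz (by linarith)
    rcases le_total (dist y x₀) (dist x x₀) with h | h
    · exact le_trans (hdd x y hx hy hx0 hy0 h)
        (mul_le_mul_of_nonneg_right (hmono x hsx) dist_nonneg)
    · rw [norm_sub_rev, dist_comm]
      exact le_trans (hdd y x hy hx hy0 hx0 h)
        (mul_le_mul_of_nonneg_right (hmono y hsy) dist_nonneg)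
  -- clean version of the extensor hypothesis
  have HEXT : ∀ L : ℝ, 0 < L → ∀ P : X → Prop,
      ∀ g : X → EuclideanSpace ℝ (Fin (m + 1)),
      (∀ x, P x → ‖g x‖ = 1) →
      (∀ x y, P x → P y → ‖g x - g y‖ ≤ L * dist x y) →
      ∃ G : X → EuclideanSpace ℝ (Fin (m + 1)),
        (∀ x, ‖G x‖ = 1) ∧ (∀ x, P x → G x = g x) ∧
        ∀ x y, ‖G x - G y‖ ≤ C * L * dist x y := by
    intro L hL P g hg1 hg2
    have hmem : ∀ b : {x | P x}, g ↑b ∈ Metric.sphere (0 : EuclideanSpace ℝ (Fin (m + 1))) 1 :=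
      fun b => mem_sphere_zero_iff_norm.mpr (hg1 ↑b b.2)
    obtain ⟨v, hv1, hv2⟩ := hext' L hL {x | P x} (fun b => ⟨g ↑b, hmem b⟩) (by
      intro p q
      have heq : dist (⟨g ↑p, hmem p⟩ : Metric.sphere (0 : EuclideanSpace ℝ (Fin (m + 1))) 1)
          ⟨g ↑q, hmem q⟩ = ‖g ↑p - g ↑q‖ := by
        rw [Subtype.dist_eq, dist_eq_norm]
      rw [heq]
      exact hg2 ↑p ↑q p.2 q.2)
    refine ⟨fun x => ↑(v x), ?_, ?_, ?_⟩
    · intro x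
      exact mem_sphere_zero_iff_norm.mp (v x).2
    · intro x hP
      have h := hv1 ⟨x, hP⟩
      exact congrArg Subtype.val h
    · intro x y
      have h := hv2 x y
      rwa [Subtype.dist_eq, dist_eq_norm] at h
  -- constants
  set Cm : ℝ := max C 1 with hCmdef
  have hCC' : C ≤ Cm := le_max_left _ _
  have hCm1 : (1:ℝ) ≤ Cm := le_max_right _ _
  have hlam1 : (0:ℝ) < lam + 1 := by linarith
  set Q : ℝ := Cm * (lam + 1) * 10000 with hQdef
  have hQ4 : 10000 ≤ Q := by nlinarith
  have hQ0 : (0:ℝ) < Q := by linarith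
  -- even-scale extensions
  have hEex : ∀ j : ℤ, ∃ G : X → EuclideanSpace ℝ (Fin (m + 1)),
      (∀ x, ‖G x‖ = 1) ∧
      (∀ x, ((x ∈ A ∧ x ≠ x₀) ∧ (100:ℝ) ^ (j - 1) ≤ dist x x₀) → G x = dir x) ∧
      ∀ x y, ‖G x - G y‖ ≤ C * ((lam + 1) / (100:ℝ) ^ (j - 1)) * dist x y := by
    intro j
    apply HEXT ((lam + 1) / (100:ℝ) ^ (j - 1)) (div_pos hlam1 (hz _))
    · intro x hx
      exact hdirn x hx.1.2
    · intro x y hx hy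
      exact hcon ((100:ℝ) ^ (j - 1)) (hz _) x y hx.1.1 hy.1.1 hx.1.2 hy.1.2 hx.2 hy.2
  choose EE hEEn hEEe hEEl using hEex
  -- transition annuli and odd-scale data
  set TP : ℤ → X → Prop :=
    fun j x => (100:ℝ) ^ j / 2 ≤ dist x x₀ ∧ dist x x₀ < 2 * (100:ℝ) ^ j with hTPdef
  set PO : ℤ → X → Prop :=
    fun j x => ((x ∈ A ∧ x ≠ x₀) ∧ (100:ℝ) ^ (j - 1) ≤ dist x x₀) ∨ TP j x ∨ TP (j + 1) x
    with hPOdef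
  set G : ℤ → X → EuclideanSpace ℝ (Fin (m + 1)) :=
    fun j x => if TP j x then EE (j - 1) x else if TP (j + 1) x then EE (j + 1) x else dir x
    with hGdef
  have hGn : ∀ (j : ℤ) (x : X), PO j x → ‖G j x‖ = 1 := by
    intro j x hx
    simp only [hGdef]
    by_cases t1 : TP j x
    · rw [if_pos t1]; exact hEEn _ x
    · rw [if_neg t1]
      by_cases t2 : TP (j + 1) x
      · rw [if_pos t2]; exact hEEn _ x
      · rw [if_neg t2]
        simp only [hPOdef] at hx
        rcases hx with h | h | h
        · exact hdirn x h.1.2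
        · exact absurd h t1
        · exact absurd h t2
  -- Lipschitz bound for the glued odd-scale data
  have hGpair : ∀ (j : ℤ) (x y : X), PO j x → PO j y →
      ‖G j x - G j y‖ ≤ Q / (100:ℝ) ^ j * dist x y := by
    intro j x y hx hy
    have hd0 : (0:ℝ) ≤ dist x y := dist_nonneg
    have hnum1 : C * ((lam + 1) * 10000) ≤ Q := by nlinarith
    have hnum2 : C * (lam + 1) ≤ Q := by nlinarith
    have hnum3 : (lam + 1) * 100 ≤ Q := by nlinarith
    have hc1 : C * ((lam + 1) / (100:ℝ) ^ (j - 1 - 1)) ≤ Q / (100:ℝ) ^ j := by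
      rw [show j - 1 - 1 = j - 2 from by omega, hzs2 j, div_div_eq_mul_div, ← mul_div_assoc,
        div_le_div_iff₀ (hz j) (hz j)]
      exact mul_le_mul_of_nonneg_right hnum1 (hz j).le
    have hc2 : C * ((lam + 1) / (100:ℝ) ^ (j + 1 - 1)) ≤ Q / (100:ℝ) ^ j := by
      rw [show j + 1 - 1 = j from by omega, ← mul_div_assoc, div_le_div_iff₀ (hz j) (hz j)]
      exact mul_le_mul_of_nonneg_right hnum2 (hz j).le
    have hc3 : (lam + 1) / (100:ℝ) ^ (j - 1) ≤ Q / (100:ℝ) ^ j := by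
      rw [hzs1 j, div_div_eq_mul_div, div_le_div_iff₀ (hz j) (hz j)]
      exact mul_le_mul_of_nonneg_right hnum3 (hz j).le
    have hfar : ∀ p q : EuclideanSpace ℝ (Fin (m + 1)), ‖p‖ = 1 → ‖q‖ = 1 →
        48 * (100:ℝ) ^ j ≤ dist x y → ‖p - q‖ ≤ Q / (100:ℝ) ^ j * dist x y := by
      intro p q hp hq hd
      have h2 : ‖p - q‖ ≤ 2 := by
        have h3 := norm_sub_le p q
        rw [hp, hq] at h3
        linarith
      refine h2.trans ?_
      rw [div_mul_eq_mul_div, le_div_iff₀ (hz j)]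
      have h10 : 10000 * dist x y ≤ Q * dist x y :=
        mul_le_mul_of_nonneg_right hQ4 hd0
      have h48 : 10000 * (48 * (100:ℝ) ^ j) ≤ 10000 * dist x y :=
        mul_le_mul_of_nonneg_left hd (by norm_num)
      nlinarith [hz j]
    have hPE_of : ∀ z : X, PO j z → ¬ TP j z → ¬ TP (j + 1) z →
        (z ∈ A ∧ z ≠ x₀) ∧ (100:ℝ) ^ (j - 1) ≤ dist z x₀ := by
      intro z hz' t1 t2
      simp only [hPOdef] at hz'
      rcases hz' with h | h | h
      · exact h
      · exact absurd h t1
      · exact absurd h t2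
    have hsubxy : dist x x₀ - dist y x₀ ≤ dist x y := by
      have h4 := abs_dist_sub_le x y x₀
      linarith [(abs_le.mp h4).2]
    have hsubyx : dist y x₀ - dist x x₀ ≤ dist x y := by
      have h4 := abs_dist_sub_le y x x₀
      have h5 := (abs_le.mp h4).2
      rw [dist_comm y x] at h5
      linarith
    simp only [hGdef]
    by_cases t1x : TP j x
    · rw [if_pos t1x]
      by_cases t1y : TP j y
      · rw [if_pos t1y]
        exact le_trans (hEEl (j - 1) x y) (mul_le_mul_of_nonneg_right hc1 hd0)
      · rw [if_neg t1y]
        by_cases t2y : TP (j + 1) y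
        · rw [if_pos t2y]
          refine hfar _ _ (hEEn _ x) (hEEn _ y) ?_
          simp only [hTPdef] at t1x t2y
          have h1 := t1x.2
          have h2 := t2y.1
          rw [hz1 j] at h2
          linarith
        · rw [if_neg t2y]
          obtain ⟨⟨hyA, hy0⟩, hyr⟩ := hPE_of y hy t1y t2y
          rw [show dir y = EE (j - 1) y from
            (hEEe (j - 1) y ⟨⟨hyA, hy0⟩, le_trans (hzm _ _ (by omega)) hyr⟩).symm]
          exact le_trans (hEEl (j - 1) x y) (mul_le_mul_of_nonneg_right hc1 hd0)
    · rw [if_neg t1x]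
      by_cases t2x : TP (j + 1) x
      · rw [if_pos t2x]
        by_cases t1y : TP j y
        · rw [if_pos t1y]
          refine hfar _ _ (hEEn _ x) (hEEn _ y) ?_
          simp only [hTPdef] at t2x t1y
          have h1 := t1y.2
          have h2 := t2x.1
          rw [hz1 j] at h2
          linarith
        · rw [if_neg t1y]
          by_cases t2y : TP (j + 1) y
          · rw [if_pos t2y]
            exact le_trans (hEEl (j + 1) x y) (mul_le_mul_of_nonneg_right hc2 hd0)
          · rw [if_neg t2y]
            obtain ⟨⟨hyA, hy0⟩, hyr⟩ := hPE_of y hy t1y t2y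
            by_cases hyr2 : (100:ℝ) ^ j ≤ dist y x₀
            · rw [show dir y = EE (j + 1) y from
                (hEEe (j + 1) y ⟨⟨hyA, hy0⟩, by
                  rw [show j + 1 - 1 = j from by omega]; exact hyr2⟩).symm]
              exact le_trans (hEEl (j + 1) x y) (mul_le_mul_of_nonneg_right hc2 hd0)
            · push_neg at hyr2
              refine hfar _ _ (hEEn _ x) (hdirn y hy0) ?_
              simp only [hTPdef] at t2x
              have h2 := t2x.1
              rw [hz1 j] at h2
              linarith
      · rw [if_neg t2x]
        obtain ⟨⟨hxA, hx0⟩, hxr⟩ := hPE_of x hx t1x t2x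
        by_cases t1y : TP j y
        · rw [if_pos t1y]
          rw [show dir x = EE (j - 1) x from
            (hEEe (j - 1) x ⟨⟨hxA, hx0⟩, le_trans (hzm _ _ (by omega)) hxr⟩).symm]
          exact le_trans (hEEl (j - 1) x y) (mul_le_mul_of_nonneg_right hc1 hd0)
        · rw [if_neg t1y]
          by_cases t2y : TP (j + 1) y
          · rw [if_pos t2y]
            by_cases hxr2 : (100:ℝ) ^ j ≤ dist x x₀
            · rw [show dir x = EE (j + 1) x from
                (hEEe (j + 1) x ⟨⟨hxA, hx0⟩, by
                  rw [show j + 1 - 1 = j from by omega]; exact hxr2⟩).symm]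
              exact le_trans (hEEl (j + 1) x y) (mul_le_mul_of_nonneg_right hc2 hd0)
            · push_neg at hxr2
              refine hfar _ _ (hdirn x hx0) (hEEn _ y) ?_
              simp only [hTPdef] at t2y
              have h2 := t2y.1
              rw [hz1 j] at h2
              linarith
          · rw [if_neg t2y]
            obtain ⟨⟨hyA, hy0⟩, hyr⟩ := hPE_of y hy t1y t2y
            exact le_trans (hcon ((100:ℝ) ^ (j - 1)) (hz _) x y hxA hyA hx0 hy0 hxr hyr)
              (mul_le_mul_of_nonneg_right hc3 hd0)
  -- odd-scale extensions
  have hOex : ∀ j : ℤ, ∃ W : X → EuclideanSpace ℝ (Fin (m + 1)),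
      (∀ x, ‖W x‖ = 1) ∧ (∀ x, PO j x → W x = G j x) ∧
      ∀ x y, ‖W x - W y‖ ≤ C * (Q / (100:ℝ) ^ j) * dist x y := by
    intro j
    exact HEXT (Q / (100:ℝ) ^ j) (div_pos hQ0 (hz j)) (PO j) (G j) (hGn j) (hGpair j)
  choose VO hVOn hVOe hVOl using hOex
  set v : ℤ → X → EuclideanSpace ℝ (Fin (m + 1)) :=
    fun j x => if Even j then EE j x else VO j x with hvdef
  have hvn : ∀ (j : ℤ) (x : X), ‖v j x‖ = 1 := by
    intro j x
    simp only [hvdef]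
    by_cases hE : Even j
    · rw [if_pos hE]; exact hEEn j x
    · rw [if_neg hE]; exact hVOn j x
  -- normalized Lipschitz bounds
  have hEElN : ∀ (k : ℤ) (x y : X),
      (100:ℝ) ^ k * ‖EE k x - EE k y‖ ≤ 100 * (C * (lam + 1)) * dist x y := by
    intro k x y
    have h := hEEl k x y
    have e1 : C * ((lam + 1) / (100:ℝ) ^ (k - 1))
        = 100 * (C * (lam + 1)) / (100:ℝ) ^ k := by
      rw [hzs1 k, div_div_eq_mul_div]
      ring
    rw [e1] at h
    have h2 : (100:ℝ) ^ k * ‖EE k x - EE k y‖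
        ≤ (100:ℝ) ^ k * (100 * (C * (lam + 1)) / (100:ℝ) ^ k * dist x y) :=
      mul_le_mul_of_nonneg_left h (hz k).le
    exact h2.trans (le_of_eq (stmt4_aux_cancel _ _ _ (hzne k)))
  have hVOlN : ∀ (k : ℤ) (x y : X),
      (100:ℝ) ^ k * ‖VO k x - VO k y‖ ≤ C * Q * dist x y := by
    intro k x y
    have h := hVOl k x y
    have e1 : C * (Q / (100:ℝ) ^ k) = C * Q / (100:ℝ) ^ k := by ring
    rw [e1] at h
    have h2 : (100:ℝ) ^ k * ‖VO k x - VO k y‖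
        ≤ (100:ℝ) ^ k * (C * Q / (100:ℝ) ^ k * dist x y) :=
      mul_le_mul_of_nonneg_left h (hz k).le
    exact h2.trans (le_of_eq (stmt4_aux_cancel _ _ _ (hzne k)))
  have hvlN : ∀ (k : ℤ) (x y : X),
      (100:ℝ) ^ k * ‖v k x - v k y‖ ≤ 100 * (C * Q) * dist x y := by
    intro k x y
    have hd0 : (0:ℝ) ≤ dist x y := dist_nonneg
    simp only [hvdef]
    by_cases hE : Even k
    · simp only [if_pos hE]
      refine (hEElN k x y).trans ?_
      have h0 : (lam + 1) * 1 ≤ (lam + 1) * (Cm * 10000) := by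
        apply mul_le_mul_of_nonneg_left _ hlam1.le
        nlinarith
      have hQlam : lam + 1 ≤ Q := by nlinarith
      have h1 : C * (lam + 1) ≤ C * Q := mul_le_mul_of_nonneg_left hQlam hC0.le
      have h2 := mul_le_mul_of_nonneg_right h1 hd0
      nlinarith
    · simp only [if_neg hE]
      refine (hVOlN k x y).trans ?_
      nlinarith [mul_nonneg (mul_pos hC0 hQ0).le hd0]
  -- v agrees with dir on relatively deep points of A
  have hvA : ∀ (j : ℤ) (x : X), x ∈ A → x ≠ x₀ → (100:ℝ) ^ (j - 1) ≤ dist x x₀ →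
      v j x = dir x := by
    intro j x hxA hx0 hle
    simp only [hvdef]
    by_cases hE : Even j
    · rw [if_pos hE]
      exact hEEe j x ⟨⟨hxA, hx0⟩, hle⟩
    · rw [if_neg hE]
      have hPO : PO j x := by
        simp only [hPOdef]
        exact Or.inl ⟨⟨hxA, hx0⟩, hle⟩
      rw [hVOe j x hPO]
      simp only [hGdef]
      by_cases t1 : TP j x
      · rw [if_pos t1]
        apply hEEe (j - 1) x
        refine ⟨⟨hxA, hx0⟩, ?_⟩
        have h1 : (100:ℝ) ^ j / 2 ≤ dist x x₀ := by
          simp only [hTPdef] at t1; exact t1.1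
        rw [show j - 1 - 1 = j - 2 from by omega, hzs2 j]
        nlinarith [hz j]
      · rw [if_neg t1]
        by_cases t2 : TP (j + 1) x
        · rw [if_pos t2]
          apply hEEe (j + 1) x
          refine ⟨⟨hxA, hx0⟩, ?_⟩
          have h1 : (100:ℝ) ^ (j + 1) / 2 ≤ dist x x₀ := by
            simp only [hTPdef] at t2; exact t2.1
          rw [show j + 1 - 1 = j from by omega]
          rw [hz1 j] at h1
          nlinarith [hz j]
        · rw [if_neg t2]
  -- scale selector bounds
  have hjl : ∀ x : X, x ≠ x₀ → (100:ℝ) ^ Int.log 100 (dist x x₀) ≤ dist x x₀ := by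
    intro x hx
    have h := Int.zpow_log_le_self (b := 100) (by norm_num) (dist_pos.mpr hx)
    simpa using h
  have hju : ∀ x : X, dist x x₀ < (100:ℝ) ^ (Int.log 100 (dist x x₀) + 1) := by
    intro x
    have h := Int.lt_zpow_succ_log_self (b := 100) (by norm_num) (dist x x₀)
    simpa using h
  -- the extension
  set w : X → EuclideanSpace ℝ (Fin (m + 1)) :=
    fun x => v (Int.log 100 (dist x x₀)) x with hwdef
  set F : X → EuclideanSpace ℝ (Fin (m + 1)) :=
    fun x => dist x x₀ • w x with hFdef
  have hwn : ∀ x : X, ‖w x‖ = 1 := by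
    intro x
    simp only [hwdef]
    exact hvn _ x
  have hFn : ∀ x : X, ‖F x‖ = dist x x₀ := by
    intro x
    simp only [hFdef]
    rw [norm_smul, Real.norm_eq_abs, abs_of_nonneg dist_nonneg, hwn x, mul_one]
  have halg : ∀ x y : X,
      ‖F x - F y‖ ≤ |dist x x₀ - dist y x₀| + dist y x₀ * ‖w x - w y‖ := by
    intro x y
    have he : F x - F y = (dist x x₀ - dist y x₀) • w x + dist y x₀ • (w x - w y) := by
      simp only [hFdef]
      rw [smul_sub, sub_smul]
      abel
    rw [he]
    refine (norm_add_le _ _).trans ?_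
    rw [norm_smul, norm_smul, Real.norm_eq_abs, Real.norm_eq_abs, hwn x, mul_one,
      abs_of_nonneg (dist_nonneg : (0:ℝ) ≤ dist y x₀)]
  have hCQ0 : (0:ℝ) < C * Q := mul_pos hC0 hQ0
  have hkey : ∀ x y : X, dist y x₀ ≤ dist x x₀ →
      ‖F x - F y‖ ≤ (9 + 10000 * (C * Q)) * dist x y := by
    intro x y hyx
    have hd0 : (0:ℝ) ≤ dist x y := dist_nonneg
    by_cases hy0 : y = x₀
    · have hF0 : F y = 0 := by
        simp only [hFdef]
        rw [hy0, dist_self, zero_smul]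
      rw [hF0, sub_zero, hFn x, show dist x y = dist x x₀ from by rw [hy0],
        show (9 + 10000 * (C * Q)) * dist x x₀
          = 9 * dist x x₀ + 10000 * (C * Q * dist x x₀) from by ring]
      linarith only [dist_nonneg (x := x) (y := x₀),
        mul_nonneg hCQ0.le (dist_nonneg (x := x) (y := x₀))]
    · have hry : 0 < dist y x₀ := dist_pos.mpr hy0
      have hrx : 0 < dist x x₀ := lt_of_lt_of_le hry hyx
      have hx0 : x ≠ x₀ := dist_pos.mp hrx
      have hxl := hjl x hx0
      have hxu := hju x
      have hyl := hjl y hy0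
      have hyu := hju y
      have hji : Int.log 100 (dist y x₀) ≤ Int.log 100 (dist x x₀) := by
        have h1 : (100:ℝ) ^ Int.log 100 (dist y x₀)
            < (100:ℝ) ^ (Int.log 100 (dist x x₀) + 1) :=
          lt_of_le_of_lt (le_trans hyl hyx) hxu
        have h2 := hzlt _ _ h1
        omega
      have habs : |dist x x₀ - dist y x₀| ≤ dist x y := abs_dist_sub_le x y x₀
      have hwb := halg x y
      have hexp : (9 + 10000 * (C * Q)) * dist x y
          = 9 * dist x y + 10000 * (C * Q * dist x y) := by ring
      by_cases hij : Int.log 100 (dist y x₀) = Int.log 100 (dist x x₀)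
      · have h1 : ‖w x - w y‖
            = ‖v (Int.log 100 (dist x x₀)) x - v (Int.log 100 (dist x x₀)) y‖ := by
          simp only [hwdef]
          rw [hij]
        have hyub : dist y x₀ ≤ 100 * (100:ℝ) ^ Int.log 100 (dist x x₀) := by
          rw [← hz1]
          exact le_of_lt (lt_of_le_of_lt hyx hxu)
        have h2 := hvlN (Int.log 100 (dist x x₀)) x y
        have h3 : dist y x₀ * ‖w x - w y‖ ≤ 10000 * (C * Q * dist x y) := by
          rw [h1]
          calc dist y x₀ * ‖v (Int.log 100 (dist x x₀)) x - v (Int.log 100 (dist x x₀)) y‖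
              ≤ 100 * (100:ℝ) ^ Int.log 100 (dist x x₀)
                * ‖v (Int.log 100 (dist x x₀)) x - v (Int.log 100 (dist x x₀)) y‖ :=
                mul_le_mul_of_nonneg_right hyub (norm_nonneg _)
            _ = 100 * ((100:ℝ) ^ Int.log 100 (dist x x₀)
                * ‖v (Int.log 100 (dist x x₀)) x - v (Int.log 100 (dist x x₀)) y‖) := by
                ring
            _ ≤ 100 * (100 * (C * Q) * dist x y) :=
                mul_le_mul_of_nonneg_left h2 (by norm_num)
            _ = 10000 * (C * Q * dist x y) := by ring
        rw [hexp]
        linarith only [hwb, habs, h3, hd0]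
      · have hjilt : Int.log 100 (dist y x₀) < Int.log 100 (dist x x₀) :=
          lt_of_le_of_ne hji hij
        by_cases hfar4 : dist x x₀ ≤ 4 * dist x y
        · have h1 := norm_sub_le (F x) (F y)
          rw [hFn x, hFn y] at h1
          rw [hexp]
          linarith only [h1, hyx, hfar4, hd0, mul_nonneg hCQ0.le hd0]
        · push_neg at hfar4
          have hrylb : dist x x₀ - dist x y ≤ dist y x₀ := by
            have h4 := dist_triangle x y x₀
            linarith
          have h34 : 3 / 4 * dist x x₀ ≤ dist y x₀ := by linarith
          have hyilt : dist y x₀ < (100:ℝ) ^ Int.log 100 (dist x x₀) :=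
            lt_of_lt_of_le hyu (hzm _ _ (by omega))
          have hytp1 : (100:ℝ) ^ Int.log 100 (dist x x₀) / 2 ≤ dist y x₀ := by
            nlinarith [hxl, h34, hz (Int.log 100 (dist x x₀))]
          have hytp : TP (Int.log 100 (dist x x₀)) y := by
            simp only [hTPdef]
            exact ⟨hytp1, by nlinarith [hz (Int.log 100 (dist x x₀))]⟩
          have hxtp : TP (Int.log 100 (dist x x₀)) x := by
            simp only [hTPdef]
            constructor
            · nlinarith [hz (Int.log 100 (dist x x₀)), hxl]
            · nlinarith [hyilt, h34, hz (Int.log 100 (dist x x₀))]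
          have hjeq : Int.log 100 (dist y x₀) = Int.log 100 (dist x x₀) - 1 := by
            have hlow : (100:ℝ) ^ (Int.log 100 (dist x x₀) - 1)
                < (100:ℝ) ^ (Int.log 100 (dist y x₀) + 1) := by
              rw [hzs1]
              nlinarith [hz (Int.log 100 (dist x x₀)), hyu, hytp1]
            have h5 := hzlt _ _ hlow
            omega
          by_cases hE : Even (Int.log 100 (dist x x₀))
          · have hwx : w x = EE (Int.log 100 (dist x x₀)) x := by
              simp only [hwdef, hvdef]
              rw [if_pos hE]
            have hoddm : ¬ Even (Int.log 100 (dist x x₀) - 1) := by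
              rcases hE with ⟨t, ht⟩
              rintro ⟨s, hs⟩
              omega
            have hTPy' : TP (Int.log 100 (dist x x₀) - 1 + 1) y := by
              rw [show Int.log 100 (dist x x₀) - 1 + 1
                = Int.log 100 (dist x x₀) from by omega]
              exact hytp
            have hnTP : ¬ TP (Int.log 100 (dist x x₀) - 1) y := by
              simp only [hTPdef]
              rintro ⟨-, h6⟩
              rw [hzs1] at h6
              nlinarith [hz (Int.log 100 (dist x x₀)), hytp1]
            have hwy : w y = EE (Int.log 100 (dist x x₀)) y := by
              simp only [hwdef, hvdef]
              rw [hjeq, if_neg hoddm]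
              have hPOy : PO (Int.log 100 (dist x x₀) - 1) y := by
                simp only [hPOdef]
                exact Or.inr (Or.inr hTPy')
              rw [hVOe _ _ hPOy]
              simp only [hGdef]
              rw [if_neg hnTP, if_pos hTPy']
              rw [show Int.log 100 (dist x x₀) - 1 + 1
                = Int.log 100 (dist x x₀) from by omega]
            have h2 := hEElN (Int.log 100 (dist x x₀)) x y
            have h3 : dist y x₀ * ‖w x - w y‖ ≤ 100 * (C * (lam + 1)) * dist x y := by
              rw [hwx, hwy]
              calc dist y x₀
                  * ‖EE (Int.log 100 (dist x x₀)) x - EE (Int.log 100 (dist x x₀)) y‖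
                  ≤ (100:ℝ) ^ Int.log 100 (dist x x₀)
                    * ‖EE (Int.log 100 (dist x x₀)) x - EE (Int.log 100 (dist x x₀)) y‖ :=
                    mul_le_mul_of_nonneg_right hyilt.le (norm_nonneg _)
                _ ≤ 100 * (C * (lam + 1)) * dist x y := h2
            have h0 : (lam + 1) * 1 ≤ (lam + 1) * (Cm * 10000) := by
              apply mul_le_mul_of_nonneg_left _ hlam1.le
              nlinarith
            have hQlam : lam + 1 ≤ Q := by nlinarith
            have h5 : C * (lam + 1) ≤ C * Q := mul_le_mul_of_nonneg_left hQlam hC0.le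
            have h6 := mul_le_mul_of_nonneg_right h5 hd0
            rw [hexp]
            linarith only [hwb, habs, h3, h6, hd0, mul_nonneg hCQ0.le hd0]
          · have hwx : w x = VO (Int.log 100 (dist x x₀)) x := by
              simp only [hwdef, hvdef]
              rw [if_neg hE]
            have hEprev : Even (Int.log 100 (dist x x₀) - 1) := by
              rcases Int.even_or_odd (Int.log 100 (dist x x₀)) with h | h
              · exact absurd h hE
              · rcases h with ⟨t, ht⟩
                exact ⟨t, by omega⟩
            have hwy1 : w y = EE (Int.log 100 (dist x x₀) - 1) y := by
              simp only [hwdef, hvdef]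
              rw [hjeq, if_pos hEprev]
            have hPOy : PO (Int.log 100 (dist x x₀)) y := by
              simp only [hPOdef]
              exact Or.inr (Or.inl hytp)
            have hwy2 : VO (Int.log 100 (dist x x₀)) y
                = EE (Int.log 100 (dist x x₀) - 1) y := by
              rw [hVOe _ _ hPOy]
              simp only [hGdef]
              rw [if_pos hytp]
            have h2 := hVOlN (Int.log 100 (dist x x₀)) x y
            have h3 : dist y x₀ * ‖w x - w y‖ ≤ C * Q * dist x y := by
              rw [hwx, hwy1, ← hwy2]
              calc dist y x₀
                  * ‖VO (Int.log 100 (dist x x₀)) x - VO (Int.log 100 (dist x x₀)) y‖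
                  ≤ (100:ℝ) ^ Int.log 100 (dist x x₀)
                    * ‖VO (Int.log 100 (dist x x₀)) x - VO (Int.log 100 (dist x x₀)) y‖ :=
                    mul_le_mul_of_nonneg_right hyilt.le (norm_nonneg _)
                _ ≤ C * Q * dist x y := h2
            rw [hexp]
            linarith only [hwb, habs, h3, hd0, mul_nonneg hCQ0.le hd0]
  refine ⟨F, ?_, hFn, 9 + 10000 * (C * Q), by linarith [hCQ0], ?_⟩
  · intro a
    by_cases h0 : (a : X) = x₀
    · have hf0 : f a = 0 := by
        have h := hnorm a
        rw [h0, dist_self] at h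
        exact norm_eq_zero.mp h
      have hF0 : F (a : X) = 0 := by
        simp only [hFdef]
        rw [show dist (a : X) x₀ = 0 from by rw [h0, dist_self], zero_smul]
      rw [hF0, hf0]
    · have hwa : w (a : X) = dir (a : X) := by
        simp only [hwdef]
        exact hvA _ _ a.2 h0 (le_trans (hzm _ _ (by omega)) (hjl _ h0))
      simp only [hFdef]
      rw [hwa, hdirA _ a.2, smul_smul, mul_inv_cancel₀ (dist_ne_zero.mpr h0), one_smul]
  · intro x y
    rw [dist_eq_norm]
    rcases le_total (dist y x₀) (dist x x₀) with h | h
    · exact hkey x y h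
    · rw [norm_sub_rev, dist_comm]
      exact hkey y x h
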